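/- Let φ be a frame for H, ψ its canonical dual frame, and m ∈ ℓ^∞. Then the spectrum of M_{m,φ,ψ} is contained in the closed convex hull of the set {m_n : n ∈ ℕ} in ℂ. -/

import Mathlib

open scoped InnerProductSpace

/-- the spectrum of the multiplier of a frame and its canonical dual is
contained in the closed convex hull of the symbol. -/
theorem spectrum_multiplier_canonical_dual_subset_convexHull
    {H : Type*} [NormedAddCommGroup H] [InnerProductSpace ℂ H] [CompleteSpace H]
    (φ : ℕ → H) (A B : ℝ) (hA : 0 < A) (hB : 0 < B)
    (hframe : ∀ f : H, ∃ s : ℝ, HasSum (fun n => ‖⟪φ n, f⟫_ℂ‖ ^ 2) s ∧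
      A * ‖f‖ ^ 2 ≤ s ∧ s ≤ B * ‖f‖ ^ 2)
    (S : H →L[ℂ] H) (hS : ∀ f : H, HasSum (fun n => ⟪φ n, f⟫_ℂ • φ n) (S f))
    (Sinv : H →L[ℂ] H) (hSinv : ∀ x : H, Sinv (S x) = x ∧ S (Sinv x) = x)
    (ψ : ℕ → H) (hψ : ∀ n, ψ n = Sinv (φ n))
    (m : ℕ → ℂ) (hm : ∃ C : ℝ, ∀ n, ‖m n‖ ≤ C)
    (M : H →L[ℂ] H)
    (hM : ∀ f : H, HasSum (fun n => (m n * ⟪ψ n, f⟫_ℂ) • φ n) (M f)) :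
    spectrum ℂ M ⊆ closure (convexHull ℝ (Set.range m)) := by
  intro lam hlam
  by_contra hout
  -- separating functional
  set s : Set ℂ := closure (convexHull ℝ (Set.range m)) with hs
  obtain ⟨f, u, hfu, hul⟩ := geometric_hahn_banach_closed_point
    ((convex_convexHull ℝ (Set.range m)).closure) isClosed_closure hout
  have hms : ∀ n, m n ∈ s := fun n =>
    subset_closure (subset_convexHull ℝ _ (Set.mem_range_self n))
  set d : ℝ := f lam - u with hd
  have hdpos : 0 < d := by simp [hd]; linarith
  -- S is self-adjoint
  have hSself : ∀ x y : H, ⟪S x, y⟫_ℂ = ⟪x, S y⟫_ℂ := by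
    intro x y
    have h1 : HasSum (fun n => ⟪y, ⟪φ n, x⟫_ℂ • φ n⟫_ℂ) ⟪y, S x⟫_ℂ :=
      (hS x).mapL (innerSL ℂ y)
    have h2 : HasSum (fun n => ⟪x, ⟪φ n, y⟫_ℂ • φ n⟫_ℂ) ⟪x, S y⟫_ℂ :=
      (hS y).mapL (innerSL ℂ x)
    have h3 : HasSum (fun n => (starRingEnd ℂ) ⟪y, ⟪φ n, x⟫_ℂ • φ n⟫_ℂ)
        ((starRingEnd ℂ) ⟪y, S x⟫_ℂ) :=
      h1.map (starRingEnd ℂ) Complex.continuous_conj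
    have : (starRingEnd ℂ) ⟪y, S x⟫_ℂ = ⟪x, S y⟫_ℂ := by
      refine h3.unique ?_
      convert h2 using 2 with n
      simp only [inner_smul_right, map_mul, inner_conj_symm]
      ring
    rw [← inner_conj_symm, this]
  have hSinvself : ∀ x y : H, ⟪Sinv x, y⟫_ℂ = ⟪x, Sinv y⟫_ℂ := by
    intro x y
    conv_lhs => rw [← (hSinv y).2]
    rw [← hSself, (hSinv x).2]
  -- the operator
  set T : H →L[ℂ] H := algebraMap ℂ (H →L[ℂ] H) lam - M with hT
  -- key estimate
  have key : ∀ g : H, A * ‖g‖ ^ 2 * d ≤ f ⟪g, T (S g)⟫_ℂ := by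
    intro g
    obtain ⟨t, ht, htA, htB⟩ := hframe g
    -- ⟪g, S g⟫ = t
    have h1 : HasSum (fun n => ⟪g, ⟪φ n, g⟫_ℂ • φ n⟫_ℂ) ⟪g, S g⟫_ℂ :=
      (hS g).mapL (innerSL ℂ g)
    have h1' : HasSum (fun n => ((‖⟪φ n, g⟫_ℂ‖ ^ 2 : ℝ) : ℂ)) ⟪g, S g⟫_ℂ := by
      convert h1 using 2 with n
      rw [inner_smul_right, ← inner_conj_symm g (φ n), RCLike.mul_conj]
      push_cast
      rfl
    have hgSg : ⟪g, S g⟫_ℂ = (t : ℂ) := h1'.unique (ht.mapL Complex.ofRealCLM)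
    -- ⟪g, M (S g)⟫ = ∑ m n * w n
    have h2 : HasSum (fun n => ⟪g, (m n * ⟪ψ n, S g⟫_ℂ) • φ n⟫_ℂ) ⟪g, M (S g)⟫_ℂ :=
      (hM (S g)).mapL (innerSL ℂ g)
    have hpsi : ∀ n, ⟪ψ n, S g⟫_ℂ = ⟪φ n, g⟫_ℂ := by
      intro n
      rw [hψ n, hSinvself, (hSinv g).1]
    have h2' : HasSum (fun n => m n * ((‖⟪φ n, g⟫_ℂ‖ ^ 2 : ℝ) : ℂ)) ⟪g, M (S g)⟫_ℂ := by
      convert h2 using 2 with n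
      rw [inner_smul_right, hpsi n, mul_assoc, ← inner_conj_symm g (φ n), RCLike.mul_conj]
      push_cast
      rfl
    -- apply f
    have h3 : HasSum (fun n => f (m n * ((‖⟪φ n, g⟫_ℂ‖ ^ 2 : ℝ) : ℂ))) (f ⟪g, M (S g)⟫_ℂ) :=
      h2'.mapL f
    have h4 : f ⟪g, M (S g)⟫_ℂ ≤ t * u := by
      refine hasSum_le (fun n => ?_) h3 (ht.mul_right u)
      have : m n * ((‖⟪φ n, g⟫_ℂ‖ ^ 2 : ℝ) : ℂ) = (‖⟪φ n, g⟫_ℂ‖ ^ 2 : ℝ) • m n := by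
        rw [Complex.real_smul]; ring
      rw [this, map_smul]
      have := (hfu (m n) (hms n)).le
      have hw : (0:ℝ) ≤ ‖⟪φ n, g⟫_ℂ‖ ^ 2 := by positivity
      calc (‖⟪φ n, g⟫_ℂ‖ ^ 2 : ℝ) • f (m n) = ‖⟪φ n, g⟫_ℂ‖ ^ 2 * f (m n) := rfl
        _ ≤ ‖⟪φ n, g⟫_ℂ‖ ^ 2 * u := by nlinarith
    have hTval : ⟪g, T (S g)⟫_ℂ = lam * (t : ℂ) - ⟪g, M (S g)⟫_ℂ := by
      simp only [hT, ContinuousLinearMap.sub_apply, Algebra.algebraMap_eq_smul_one,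
        ContinuousLinearMap.smul_apply, ContinuousLinearMap.one_apply, inner_sub_right,
        inner_smul_right, hgSg]
    have hflam : f (lam * (t : ℂ)) = t * f lam := by
      have : lam * (t : ℂ) = t • lam := by rw [Complex.real_smul]; ring
      rw [this, map_smul]; rfl
    have : f ⟪g, T (S g)⟫_ℂ = t * f lam - f ⟪g, M (S g)⟫_ℂ := by
      rw [hTval, map_sub, hflam]
    rw [this]
    have hgsq : (0:ℝ) ≤ ‖g‖ ^ 2 := by positivity
    have : A * ‖g‖ ^ 2 * d ≤ t * d := by nlinarith
    calc A * ‖g‖ ^ 2 * d ≤ t * d := this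
      _ = t * f lam - t * u := by rw [hd]; ring
      _ ≤ t * f lam - f ⟪g, M (S g)⟫_ℂ := by linarith
  -- f is nonzero
  have hfnorm : 0 < ‖f‖ := by
    rw [norm_pos_iff]
    intro h
    have := hfu (m 0) (hms 0)
    rw [h] at this hul
    simp at this hul
    linarith
  -- antilipschitz bound : ‖h‖ ≤ K * ‖T h‖
  set K : ℝ := ‖S‖ * ‖f‖ / (A * d) with hK
  have hbound : ∀ h : H, ‖h‖ ≤ K * ‖T h‖ := by
    intro h
    set g : H := Sinv h with hg
    have hSg : S g = h := (hSinv h).2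
    have h1 : A * ‖g‖ ^ 2 * d ≤ f ⟪g, T h⟫_ℂ := by rw [← hSg]; exact key g
    have h2 : f ⟪g, T h⟫_ℂ ≤ ‖f‖ * (‖g‖ * ‖T h‖) := by
      calc f ⟪g, T h⟫_ℂ ≤ ‖f ⟪g, T h⟫_ℂ‖ := le_abs_self _
        _ ≤ ‖f‖ * ‖⟪g, T h⟫_ℂ‖ := f.le_opNorm _
        _ ≤ ‖f‖ * (‖g‖ * ‖T h‖) := by
            have := norm_inner_le_norm (𝕜 := ℂ) g (T h)
            nlinarith [norm_nonneg f]
    by_cases hg0 : g = 0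
    · have : h = 0 := by rw [← hSg, hg0, map_zero]
      simp [this]
    · have hgpos : 0 < ‖g‖ := norm_pos_iff.2 hg0
      have h3 : A * d * ‖g‖ ≤ ‖f‖ * ‖T h‖ := by
        have := h1.trans h2
        nlinarith
      have h4 : ‖h‖ ≤ ‖S‖ * ‖g‖ := by rw [← hSg]; exact S.le_opNorm g
      have hAd : 0 < A * d := by positivity
      rw [hK]
      rw [div_mul_eq_mul_div, le_div_iff₀ hAd]
      calc ‖h‖ * (A * d) ≤ ‖S‖ * ‖g‖ * (A * d) := by nlinarith
        _ = ‖S‖ * (A * d * ‖g‖) := by ring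
        _ ≤ ‖S‖ * (‖f‖ * ‖T h‖) := by nlinarith [norm_nonneg S]
        _ = ‖S‖ * ‖f‖ * ‖T h‖ := by ring
  have hKnn : 0 ≤ K := by positivity
  have hanti : AntilipschitzWith K.toNNReal T := by
    apply ContinuousLinearMap.antilipschitz_of_bound
    intro x
    rw [Real.coe_toNNReal K hKnn]
    exact hbound x
  -- dense range
  have hdense : (T.range).topologicalClosure = ⊤ := by
    rw [ContinuousLinearMap.closed_range_of_antilipschitz hanti]
    have : IsClosed (T.range : Set H) := hanti.isClosed_range T.uniformContinuous
    haveI : CompleteSpace (T.range) := this.completeSpace_coe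
    rw [← Submodule.orthogonal_eq_bot_iff]
    rw [Submodule.eq_bot_iff]
    intro g hgmem
    have h0 : ⟪T (S g), g⟫_ℂ = 0 :=
      (Submodule.mem_orthogonal _ g).1 hgmem _ (LinearMap.mem_range_self _ _)
    have h0' : ⟪g, T (S g)⟫_ℂ = 0 := by
      rw [← inner_conj_symm, h0, map_zero]
    have hkey := key g
    rw [h0', map_zero] at hkey
    have hsq : ‖g‖ ^ 2 ≤ 0 := by
      by_contra hcon
      push_neg at hcon
      nlinarith [mul_pos (mul_pos hA hcon) hdpos]
    have : ‖g‖ = 0 := by nlinarith [norm_nonneg g, sq_nonneg ‖g‖]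
    exact norm_eq_zero.1 this
  -- conclude
  have hbij : Function.Bijective T :=
    (T.bijective_iff_dense_range_and_antilipschitz).2 ⟨hdense, K.toNNReal, hanti⟩
  have : IsUnit T := ContinuousLinearMap.isUnit_iff_bijective.2 hbij
  exact (spectrum.mem_iff.1 hlam) this
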